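/- Define k_n(x,y) = Σ_{k=0}^{n−1} p_k(x) q_k(y) (where x may be complex) and K_n(x,y) = Σ_{k=0}^{n−1} P_k(x) Q_k(y). Then for all x, y > 0 and every ρ > 0, K_n(x,y) = (1/2πi) ∮_{|s|=ρ} ( ∫₀^∞ k_n(x/s, y/t) (t/s)^ν e^{s−t} dt/t ) ds/s, where the contour is the counterclockwise circle of radius ρ centered at 0. -/

import Mathlib

open MeasureTheory Set

lemma circle_exp_int (ρ : ℝ) (hρ : 0 < ρ) (m : ℕ) :
    (∮ z in C(0, ρ), Complex.exp z / z ^ (m + 1)) =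
      2 * Real.pi * Complex.I / (m.factorial : ℂ) := by
  set R : NNReal := ρ.toNNReal with hR
  have hRρ : (R : ℝ) = ρ := Real.coe_toNNReal ρ hρ.le
  have hball : HasFPowerSeriesOnBall Complex.exp (cauchyPowerSeries Complex.exp 0 R) 0 R := by
    refine DifferentiableOn.hasFPowerSeriesOnBall ?_ ?_
    · exact Complex.differentiable_exp.differentiableOn
    · simpa [hR] using hρ
  have h1 := hball.factorial_smul (1 : ℂ) m
  have h2 : iteratedFDeriv ℂ m Complex.exp 0 (fun _ => (1:ℂ)) = 1 := by
    rw [← iteratedDeriv_eq_iteratedFDeriv]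
    rw [iteratedDeriv_eq_iterate, Complex.iter_deriv_exp, Complex.exp_zero]
  rw [h2, cauchyPowerSeries_apply] at h1
  have h3 : (∮ z in C(0, (R:ℝ)), (1 / (z - 0)) ^ m • (z - 0)⁻¹ • Complex.exp z)
      = ∮ z in C(0, ρ), Complex.exp z / z ^ (m + 1) := by
    rw [hRρ]
    congr 1
    funext z
    simp only [sub_zero, one_div, smul_eq_mul, inv_pow, div_eq_mul_inv, pow_succ, mul_inv]
    ring
  rw [h3] at h1
  have hπ : (2 * Real.pi * Complex.I : ℂ) ≠ 0 := by
    simp [Real.pi_ne_zero, Complex.I_ne_zero]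
  have hm : (m.factorial : ℂ) ≠ 0 := by
    exact_mod_cast Nat.cast_ne_zero.mpr m.factorial_ne_zero
  field_simp [smul_eq_mul] at h1 ⊢
  rw [nsmul_eq_mul, smul_eq_mul] at h1
  field_simp at h1
  rw [mul_comm]; exact h1

lemma circleIntegral_finset_sum' {ι : Type*} (S : Finset ι) (f : ι → ℂ → ℂ) (c : ℂ) (R : ℝ)
    (hR : 0 ≤ R) (h : ∀ i ∈ S, ContinuousOn (f i) (Metric.sphere c R)) :
    (∮ z in C(c, R), ∑ i ∈ S, f i z) = ∑ i ∈ S, ∮ z in C(c, R), f i z := by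
  simp only [circleIntegral, Finset.smul_sum]
  rw [intervalIntegral.integral_finset_sum]
  intro i hi
  have hc : Continuous fun θ : ℝ => f i (circleMap c R θ) :=
    (h i hi).comp_continuous (continuous_circleMap c R) fun θ => circleMap_mem_sphere c hR θ
  have : Continuous fun θ : ℝ => deriv (circleMap c R) θ • f i (circleMap c R θ) := by
    simp only [deriv_circleMap]
    exact (((continuous_circleMap 0 R).mul continuous_const)).smul hc
  exact this.intervalIntegrable 0 (2 * Real.pi)

lemma g_integrable (ν : ℕ) (q : ℝ → ℝ) (hqmeas : Measurable q)
    (hqint : IntegrableOn (fun x => |q x|) (Ioi 0)) {y : ℝ} (hy : 0 < y) :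
    IntegrableOn (fun t => t ^ ν * Real.exp (-t) * q (y / t) / t) (Ioi 0) := by
  have himg : (fun u => y / u) '' Ioi 0 = Ioi (0:ℝ) := by
    ext t
    constructor
    · rintro ⟨u, hu, rfl⟩
      exact div_pos hy hu
    · intro ht
      exact ⟨y / t, div_pos hy ht, by field_simp⟩
  have hderiv : ∀ u ∈ Ioi (0:ℝ),
      HasDerivWithinAt (fun u => y / u) (-(y / u ^ 2)) (Ioi 0) u := by
    intro u hu
    have : HasDerivAt (fun u : ℝ => y / u) (-(y / u ^ 2)) u := by
      simpa [div_eq_mul_inv, mul_comm] using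
        ((hasDerivAt_inv (ne_of_gt hu)).const_mul y)
    exact this.hasDerivWithinAt
  have hinj : InjOn (fun u => y / u) (Ioi 0) := by
    intro u₁ h₁ u₂ h₂ h
    simp only at h
    rw [div_eq_div_iff (ne_of_gt h₁) (ne_of_gt h₂)] at h
    exact mul_left_cancel₀ (ne_of_gt hy) h.symm
  rw [← himg, integrableOn_image_iff_integrableOn_abs_deriv_smul measurableSet_Ioi hderiv hinj]
  have hmeas : AEStronglyMeasurable
      (fun u : ℝ => |(-(y / u ^ 2))| •
        ((y / u) ^ ν * Real.exp (-(y / u)) * q (y / (y / u)) / (y / u)))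
      (volume.restrict (Ioi 0)) := by
    apply Measurable.aestronglyMeasurable
    have hq' : Measurable fun u : ℝ => q (y / (y / u)) :=
      hqmeas.comp (measurable_const.div (measurable_const.div measurable_id))
    fun_prop
  refine Integrable.mono' (g := fun u => ((ν + 1).factorial / y) * |q u|)
    (hqint.const_mul _) hmeas ?_
  refine (ae_restrict_iff' measurableSet_Ioi).2 (Filter.Eventually.of_forall ?_)
  intro u hu
  have hu0 : (0:ℝ) < u := hu
  have hyu : y / (y / u) = u := by field_simp
  have hv : (0:ℝ) < y / u := div_pos hy hu0
  rw [hyu]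
  rw [Real.norm_eq_abs, smul_eq_mul]
  have hC : |(-(y / u ^ 2))| * ((y / u) ^ ν * Real.exp (-(y / u)) / (y / u))
      ≤ (ν + 1).factorial / y := by
    rw [abs_neg, abs_of_pos (by positivity)]
    have hexp : Real.exp (-(y / u)) ≤ (ν + 1).factorial / (y / u) ^ (ν + 1) := by
      have h1 := Real.pow_div_factorial_le_exp (x := y / u) hv.le (ν + 1)
      rw [div_le_iff₀ (by positivity)] at h1
      rw [le_div_iff₀ (by positivity), Real.exp_neg]
      calc (Real.exp (y / u))⁻¹ * (y / u) ^ (ν + 1)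
          ≤ (Real.exp (y / u))⁻¹ * (Real.exp (y / u) * (ν + 1).factorial) := by
            gcongr
          _ = (ν + 1).factorial := by
            rw [← mul_assoc, inv_mul_cancel₀ (Real.exp_ne_zero _), one_mul]
    calc y / u ^ 2 * ((y / u) ^ ν * Real.exp (-(y / u)) / (y / u))
        ≤ y / u ^ 2 * ((y / u) ^ ν * ((ν + 1).factorial / (y / u) ^ (ν + 1)) / (y / u)) := by
          gcongr
      _ = (ν + 1).factorial / y := by
          rw [pow_succ]
          field_simp
          have h' : u * (y / u) = y := by field_simp
          linear_combination -((y / u) ^ ν) * h'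
    -- done
  rw [abs_mul, abs_abs]
  have habs : |(y / u) ^ ν * Real.exp (-(y / u)) * q u / (y / u)|
      = ((y / u) ^ ν * Real.exp (-(y / u)) / (y / u)) * |q u| := by
    rw [show (y / u) ^ ν * Real.exp (-(y / u)) * q u / (y / u)
        = ((y / u) ^ ν * Real.exp (-(y / u)) / (y / u)) * q u by ring, abs_mul]
    congr 1
    exact abs_of_pos (by positivity)
  rw [habs, ← mul_assoc]
  exact mul_le_mul_of_nonneg_right hC (abs_nonneg _)

theorem stmt8
    (n : ℕ) (hn : 1 ≤ n) (ν : ℕ)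
    (a : ℕ → ℕ → ℝ) (ha : ∀ k < n, a k k ≠ 0)
    (p : ℕ → ℝ → ℝ)
    (hp : ∀ k < n, ∀ x : ℝ, p k x = ∑ j ∈ Finset.range (k + 1), a j k * x ^ j)
    (q : ℕ → ℝ → ℝ) (hqmeas : ∀ k < n, Measurable (q k))
    (hqint : ∀ k < n, ∀ j < n, IntegrableOn (fun x => x ^ j * |q k x|) (Ioi 0))
    (hbiorth : ∀ j < n, ∀ k < n,
      ∫ x in Ioi (0:ℝ), p j x * q k x = if j = k then 1 else 0)
    (P : ℕ → ℝ → ℝ)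
    (hP : ∀ k < n, ∀ x : ℝ, P k x =
      ∑ j ∈ Finset.range (k + 1), a j k / (Nat.factorial (j + ν) : ℝ) * x ^ j)
    (Q : ℕ → ℝ → ℝ)
    (hQ : ∀ k < n, ∀ y ∈ Ioi (0:ℝ),
      Q k y = ∫ t in Ioi (0:ℝ), t ^ ν * Real.exp (-t) * q k (y / t) / t)
    (kn : ℂ → ℝ → ℂ)
    (hkn : ∀ (s : ℂ) (y : ℝ), kn s y = ∑ k ∈ Finset.range n,
      (∑ j ∈ Finset.range (k + 1), (a j k : ℂ) * s ^ j) * (q k y : ℂ))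
    (Kn : ℝ → ℝ → ℝ)
    (hKn : ∀ x y : ℝ, Kn x y = ∑ k ∈ Finset.range n, P k x * Q k y) :
    ∀ x ∈ Ioi (0:ℝ), ∀ y ∈ Ioi (0:ℝ), ∀ ρ : ℝ, 0 < ρ →
      (Kn x y : ℂ) = (2 * Real.pi * Complex.I)⁻¹ *
        ∮ s in C(0, ρ), (∫ t in Ioi (0:ℝ),
          kn ((x : ℂ) / s) (y / t) * ((t : ℂ) / s) ^ ν *
            Complex.exp (s - (t : ℂ)) / (t : ℂ)) / s := by
  intro x hx y hy ρ hρ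
  have hy0 : (0:ℝ) < y := hy
  have hg : ∀ k < n, IntegrableOn (fun t => t ^ ν * Real.exp (-t) * q k (y / t) / t) (Ioi 0) := by
    intro k hk
    refine g_integrable ν (q k) (hqmeas k hk) ?_ hy0
    simpa using hqint k hk 0 (lt_of_lt_of_le Nat.zero_lt_one hn)
  have hπ : (2 * (Real.pi:ℂ) * Complex.I) ≠ 0 := by
    simp [Real.pi_ne_zero, Complex.I_ne_zero]
  have hsne : ∀ s ∈ Metric.sphere (0:ℂ) ρ, s ≠ 0 := by
    intro s hs h0
    rw [Metric.mem_sphere, h0, dist_self] at hs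
    exact hρ.ne hs
  -- rewrite the circle integrand on the sphere
  have hcongr : (∮ s in C(0, ρ), (∫ t in Ioi (0:ℝ),
        kn ((x : ℂ) / s) (y / t) * ((t : ℂ) / s) ^ ν *
          Complex.exp (s - (t : ℂ)) / (t : ℂ)) / s)
      = ∮ s in C(0, ρ), ∑ k ∈ Finset.range n, ∑ j ∈ Finset.range (k + 1),
          ((a j k : ℂ) * (x:ℂ) ^ j * (Q k y : ℂ)) *
            (Complex.exp s / s ^ (j + ν + 1)) := by
    refine circleIntegral.integral_congr hρ.le ?_
    intro s hs
    have hs0 : s ≠ 0 := hsne s hs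
    have hinner : (∫ t in Ioi (0:ℝ),
          kn ((x : ℂ) / s) (y / t) * ((t : ℂ) / s) ^ ν *
            Complex.exp (s - (t : ℂ)) / (t : ℂ))
        = ∑ k ∈ Finset.range n,
            ((∑ j ∈ Finset.range (k + 1), (a j k : ℂ) * ((x:ℂ) / s) ^ j) *
              (s⁻¹) ^ ν * Complex.exp s) * ((Q k y : ℝ) : ℂ) := by
      rw [setIntegral_congr_fun (g := fun t : ℝ => ∑ k ∈ Finset.range n,
            ((∑ j ∈ Finset.range (k + 1), (a j k : ℂ) * ((x:ℂ) / s) ^ j) *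
              (s⁻¹) ^ ν * Complex.exp s) *
              ((t ^ ν * Real.exp (-t) * q k (y / t) / t : ℝ) : ℂ))
          measurableSet_Ioi ?_]
      · rw [integral_finset_sum]
        · refine Finset.sum_congr rfl fun k hk => ?_
          rw [MeasureTheory.integral_const_mul]
          congr 1
          rw [hQ k (Finset.mem_range.mp hk) y hy]
          exact integral_ofReal
        · intro k hk
          exact ((hg k (Finset.mem_range.mp hk)).ofReal.const_mul _)
      · intro t ht
        have ht0 : (0:ℝ) < t := ht
        have htne : (t:ℂ) ≠ 0 := by
          exact_mod_cast ht0.ne'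
        simp only [hkn, Finset.sum_mul, Finset.sum_div]
        refine Finset.sum_congr rfl fun k hk => ?_
        push_cast [Complex.ofReal_exp]
        rw [Complex.exp_sub, Complex.exp_neg, div_pow]
        field_simp
        simp only [div_eq_mul_inv]
        refine Finset.sum_congr rfl fun j _ => ?_
        ring
    show (∫ t in Ioi (0:ℝ), kn ((x : ℂ) / s) (y / t) * ((t : ℂ) / s) ^ ν *
            Complex.exp (s - (t : ℂ)) / (t : ℂ)) / s = _
    rw [hinner, Finset.sum_div]
    refine Finset.sum_congr rfl fun k hk => ?_
    rw [Finset.sum_mul, Finset.sum_mul, Finset.sum_mul, Finset.sum_div]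
    refine Finset.sum_congr rfl fun j hj => ?_
    rw [div_pow, pow_add, pow_add, pow_one]
    field_simp
    have hss : s ^ ν * s⁻¹ ^ ν = 1 := by rw [← mul_pow, mul_inv_cancel₀ hs0, one_pow]
    linear_combination ((a j k : ℂ) * (x:ℂ) ^ j * (Q k y : ℂ)) * hss
  rw [hcongr]
  have hem : ∀ m : ℕ, ContinuousOn (fun s : ℂ => Complex.exp s / s ^ m)
      (Metric.sphere (0:ℂ) ρ) := fun m =>
    Complex.continuous_exp.continuousOn.div (continuousOn_pow m)
      (fun s hs => pow_ne_zero _ (hsne s hs))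
  rw [circleIntegral_finset_sum' _ (f := fun k s => ∑ j ∈ Finset.range (k + 1),
      ((a j k : ℂ) * (x:ℂ) ^ j * (Q k y : ℂ)) * (Complex.exp s / s ^ (j + ν + 1))) _ _ hρ.le (fun k _ =>
    continuousOn_finset_sum _ (fun j _ => continuousOn_const.mul (hem (j + ν + 1))))]
  have houter : ∀ k ∈ Finset.range n,
      (∮ s in C(0, ρ), ∑ j ∈ Finset.range (k + 1),
          ((a j k : ℂ) * (x:ℂ) ^ j * (Q k y : ℂ)) *
            (Complex.exp s / s ^ (j + ν + 1)))
      = ∑ j ∈ Finset.range (k + 1),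
          ((a j k : ℂ) * (x:ℂ) ^ j * (Q k y : ℂ)) *
            (2 * Real.pi * Complex.I / ((j + ν).factorial : ℂ)) := by
    intro k _
    rw [circleIntegral_finset_sum' _ (f := fun j s =>
      ((a j k : ℂ) * (x:ℂ) ^ j * (Q k y : ℂ)) * (Complex.exp s / s ^ (j + ν + 1))) _ _ hρ.le
      (fun j _ => continuousOn_const.mul (hem (j + ν + 1)))]
    refine Finset.sum_congr rfl fun j _ => ?_
    rw [circleIntegral.integral_const_mul, circle_exp_int ρ hρ (j + ν)]
  rw [Finset.sum_congr rfl houter]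
  rw [hKn x y]
  push_cast
  rw [Finset.mul_sum]
  refine Finset.sum_congr rfl fun k hk => ?_
  rw [hP k (Finset.mem_range.mp hk) x]
  push_cast
  rw [Finset.sum_mul, Finset.mul_sum]
  refine Finset.sum_congr rfl fun j _ => ?_
  have hfact : (((j + ν).factorial : ℝ) : ℂ) ≠ 0 := by
    exact_mod_cast Nat.cast_ne_zero.mpr (j + ν).factorial_ne_zero
  field_simp
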